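/- arXiv:0710.5239 — 4 statements merged into one kernel-verified Lean document; each statement's English description precedes it below -/
import Mathlib

section
/- Let H be a complex Hilbert space and (T i)_{i : ι} a nonempty family of selfadjoint bounded operators on H with 0 ≤ T i ≤ 1 for all i, which is directed in the Loewner order (for all i, j there exists k with T i ≤ T k and T j ≤ T k). Then there exists a selfadjoint bounded operator G with 0 ≤ G ≤ 1 such that for every ψ ∈ H the real number ⟪ψ, G ψ⟫ equals the supremum over i of ⟪ψ, T i ψ⟫, and G is the least upper bound of the family (T i) in the Loewner order on bounded operators: T i ≤ G for all i, and any selfadjoint bounded operator G' with T i ≤ G' for all i satisfies G ≤ G'. -/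
set_option synthInstance.maxHeartbeats 1000000
set_option maxHeartbeats 1000000

open Filter Topology ContinuousLinearMap

section Aux
variable {H : Type*} [NormedAddCommGroup H] [InnerProductSpace ℂ H] [CompleteSpace H]

private lemma aux_norm_sq_le (S : H →L[ℂ] H) (h0 : 0 ≤ S) (ψ : H) :
    ‖S ψ‖ ^ 2 ≤ ‖S‖ * (inner ℂ ψ (S ψ) : ℂ).re := by
  set R := CFC.sqrt S with hRdef
  have hR0 : 0 ≤ R := CFC.sqrt_nonneg (a := S)
  have hRmul : R * R = S := CFC.sqrt_mul_sqrt_self S h0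
  have hRsa : IsSelfAdjoint R := IsSelfAdjoint.of_nonneg hR0
  have hsym := (ContinuousLinearMap.isSelfAdjoint_iff_isSymmetric).mp hRsa
  have h1 : ‖R ψ‖ ^ 2 = (inner ℂ ψ (S ψ) : ℂ).re := by
    have e1 : (inner ℂ ψ (S ψ) : ℂ) = inner ℂ (R ψ) (R ψ) := by
      conv_lhs => rw [← hRmul]
      exact (hsym ψ (R ψ)).symm
    rw [e1, ← @inner_self_eq_norm_sq ℂ]
    rfl
  have h2 : ‖R‖ * ‖R‖ = ‖S‖ := by
    rw [← hRmul, ← CStarRing.norm_star_mul_self (x := R), hRsa.star_eq]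
  calc ‖S ψ‖ ^ 2 = ‖R (R ψ)‖ ^ 2 := by rw [← hRmul]; rfl
    _ ≤ (‖R‖ * ‖R ψ‖) ^ 2 := by gcongr; exact R.le_opNorm _
    _ = ‖S‖ * ‖R ψ‖ ^ 2 := by rw [mul_pow, sq ‖R‖, h2]
    _ = ‖S‖ * (inner ℂ ψ (S ψ) : ℂ).re := by rw [h1]

private lemma aux_re (S : H →L[ℂ] H) (ψ : H) :
    S.reApplyInnerSelf ψ = (inner ℂ ψ (S ψ) : ℂ).re := by
  show RCLike.re (inner ℂ (S ψ) ψ : ℂ) = _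
  rw [inner_re_symm]
  rfl

private lemma aux_quad_sub (A B : H →L[ℂ] H) (ψ : H) :
    (inner ℂ ψ ((A - B) ψ) : ℂ).re = (inner ℂ ψ (A ψ) : ℂ).re - (inner ℂ ψ (B ψ) : ℂ).re := by
  simp [ContinuousLinearMap.sub_apply, inner_sub_right]

private lemma aux_inner_self (ψ : H) : (inner ℂ ψ ψ : ℂ).re = ‖ψ‖ ^ 2 := by
  rw [← @inner_self_eq_norm_sq ℂ]; rfl

private lemma aux_le {A B : H →L[ℂ] H} (hA : IsSelfAdjoint A) (hB : IsSelfAdjoint B)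
    (h : ∀ ψ, (inner ℂ ψ (A ψ) : ℂ).re ≤ (inner ℂ ψ (B ψ) : ℂ).re) : A ≤ B := by
  rw [ContinuousLinearMap.le_def]
  refine ⟨ContinuousLinearMap.isSelfAdjoint_iff_isSymmetric.mp (hB.sub hA), fun ψ => ?_⟩
  rw [aux_re, aux_quad_sub]
  have := h ψ
  linarith

private lemma aux_le_mono {A B : H →L[ℂ] H} (h : A ≤ B) (ψ : H) :
    (inner ℂ ψ (A ψ) : ℂ).re ≤ (inner ℂ ψ (B ψ) : ℂ).re := by
  have h2 := ((ContinuousLinearMap.le_def A B).mp h).2 ψ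
  rw [aux_re, aux_quad_sub] at h2
  linarith

end Aux

/-- A nonempty family of selfadjoint bounded operators `0 ≤ T i ≤ 1` on a complex Hilbert
space which is directed in the Loewner order has a least upper bound `G`, which is a
selfadjoint operator with `0 ≤ G ≤ 1` whose quadratic form is the pointwise supremum of
the quadratic forms of the `T i`. -/
theorem directed_selfadjoint_family_has_lub
    {H : Type*} [NormedAddCommGroup H] [InnerProductSpace ℂ H] [CompleteSpace H]
    {ι : Type*} [Nonempty ι] (T : ι → H →L[ℂ] H)
    (hsa : ∀ i, IsSelfAdjoint (T i))
    (hpos : ∀ i, 0 ≤ T i) (hle : ∀ i, T i ≤ 1)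
    (hdir : ∀ i j : ι, ∃ k : ι, T i ≤ T k ∧ T j ≤ T k) :
    ∃ G : H →L[ℂ] H, IsSelfAdjoint G ∧ 0 ≤ G ∧ G ≤ 1 ∧
      (∀ ψ : H, (inner ℂ ψ (G ψ) : ℂ).re = ⨆ i : ι, (inner ℂ ψ (T i ψ) : ℂ).re) ∧
      (∀ i, T i ≤ G) ∧
      (∀ G' : H →L[ℂ] H, IsSelfAdjoint G' → (∀ i, T i ≤ G') → G ≤ G') := by
  classical
  letI : Preorder ι :=
    { le := fun i j => T i ≤ T j
      le_refl := fun i => le_refl (T i)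
      le_trans := fun a b c (h : T a ≤ T b) (h' : T b ≤ T c) => le_trans h h' }
  haveI : IsDirected ι (· ≤ ·) := ⟨hdir⟩
  -- quadratic form facts
  have hrub : ∀ (i : ι) (ψ : H), (inner ℂ ψ (T i ψ) : ℂ).re ≤ ‖ψ‖ ^ 2 := by
    intro i ψ
    have := aux_le_mono (hle i) ψ
    simpa [ContinuousLinearMap.one_apply, aux_inner_self, ← Complex.ofReal_pow] using this
  have hr0 : ∀ (i : ι) (ψ : H), 0 ≤ (inner ℂ ψ (T i ψ) : ℂ).re := by
    intro i ψ
    have := aux_le_mono (hpos i) ψ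
    simpa using this
  have hrbdd : ∀ ψ : H, BddAbove (Set.range fun i => (inner ℂ ψ (T i ψ) : ℂ).re) := by
    intro ψ
    exact ⟨‖ψ‖ ^ 2, by rintro x ⟨i, rfl⟩; exact hrub i ψ⟩
  have hrmono : ∀ ψ : H, Monotone fun i => (inner ℂ ψ (T i ψ) : ℂ).re :=
    fun ψ _ _ hij => aux_le_mono hij ψ
  have hrsup : ∀ ψ : H, Tendsto (fun i => (inner ℂ ψ (T i ψ) : ℂ).re) atTop
      (𝓝 (⨆ i, (inner ℂ ψ (T i ψ) : ℂ).re)) :=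
    fun ψ => tendsto_atTop_ciSup (hrmono ψ) (hrbdd ψ)
  have hnorm1 : ∀ i, ‖T i‖ ≤ 1 :=
    fun i => (CStarAlgebra.norm_le_one_iff_of_nonneg _ (hpos i)).mpr (hle i)
  have hkey : ∀ i j : ι, i ≤ j → ∀ ψ : H,
      ‖T j ψ - T i ψ‖ ^ 2 ≤ (inner ℂ ψ (T j ψ) : ℂ).re - (inner ℂ ψ (T i ψ) : ℂ).re := by
    intro i j hij ψ
    have h0 : (0 : H →L[ℂ] H) ≤ T j - T i := by
      rw [ContinuousLinearMap.le_def, sub_zero]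
      exact (ContinuousLinearMap.le_def _ _).mp hij
    have h1 : T j - T i ≤ 1 := by
      refine aux_le ((hsa j).sub (hsa i)) ((IsSelfAdjoint.one _)) fun φ => ?_
      rw [aux_quad_sub]
      have h2 : (inner ℂ φ ((1 : H →L[ℂ] H) φ) : ℂ).re = ‖φ‖ ^ 2 := by
        rw [ContinuousLinearMap.one_apply, aux_inner_self]
      rw [h2]
      have := hrub j φ
      have := hr0 i φ
      linarith
    have hn : ‖T j - T i‖ ≤ 1 := (CStarAlgebra.norm_le_one_iff_of_nonneg _ h0).mpr h1
    have h2 := aux_norm_sq_le (T j - T i) h0 ψ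
    have h3 : (inner ℂ ψ ((T j - T i) ψ) : ℂ).re
        = (inner ℂ ψ (T j ψ) : ℂ).re - (inner ℂ ψ (T i ψ) : ℂ).re := aux_quad_sub _ _ ψ
    have h4 : 0 ≤ (inner ℂ ψ ((T j - T i) ψ) : ℂ).re := by
      have := aux_le_mono h0 ψ
      simpa using this
    calc ‖T j ψ - T i ψ‖ ^ 2 = ‖(T j - T i) ψ‖ ^ 2 := by rw [ContinuousLinearMap.sub_apply]
      _ ≤ ‖T j - T i‖ * (inner ℂ ψ ((T j - T i) ψ) : ℂ).re := h2
      _ ≤ 1 * (inner ℂ ψ ((T j - T i) ψ) : ℂ).re := mul_le_mul_of_nonneg_right hn h4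
      _ = (inner ℂ ψ (T j ψ) : ℂ).re - (inner ℂ ψ (T i ψ) : ℂ).re := by rw [one_mul, h3]
  -- convergence of the net of vectors
  have hconv : ∀ ψ : H, ∃ gψ : H, Tendsto (fun i => T i ψ) atTop (𝓝 gψ) := by
    intro ψ
    rw [← cauchy_map_iff_exists_tendsto, cauchy_map_iff]
    refine ⟨inferInstance, ?_⟩
    rw [Filter.prod_atTop_atTop_eq, Metric.uniformity_basis_dist.tendsto_right_iff]
    intro ε hε
    have hεpos : (0 : ℝ) < (ε / 3) ^ 2 := by positivity
    have hev : ∀ᶠ i in atTop,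
        (⨆ i, (inner ℂ ψ (T i ψ) : ℂ).re) - (ε / 3) ^ 2 < (inner ℂ ψ (T i ψ) : ℂ).re :=
      (hrsup ψ).eventually (eventually_gt_nhds (by linarith))
    obtain ⟨N, hN⟩ := Filter.eventually_atTop.mp hev
    rw [Filter.eventually_atTop_prod_self']
    refine ⟨N, fun k hk l hl => ?_⟩
    obtain ⟨m, hkm, hlm⟩ := hdir k l
    have est : ∀ a : ι, N ≤ a → a ≤ m → ‖T m ψ - T a ψ‖ ≤ ε / 3 := by
      intro a hNa ham
      have h1 := hkey a m ham ψ
      have h2 : (inner ℂ ψ (T m ψ) : ℂ).re ≤ ⨆ i, (inner ℂ ψ (T i ψ) : ℂ).re :=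
        le_ciSup (hrbdd ψ) m
      have h3 := hN a hNa
      have h4 : ‖T m ψ - T a ψ‖ ^ 2 ≤ (ε / 3) ^ 2 := by linarith
      nlinarith [norm_nonneg (T m ψ - T a ψ), hε]
    have e1 := est k hk hkm
    have e2 := est l hl hlm
    calc dist (T k ψ) (T l ψ) ≤ dist (T k ψ) (T m ψ) + dist (T m ψ) (T l ψ) :=
          dist_triangle _ _ _
      _ = ‖T m ψ - T k ψ‖ + ‖T m ψ - T l ψ‖ := by
          rw [dist_eq_norm, dist_eq_norm, norm_sub_rev (T k ψ)]
      _ < ε := by linarith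
  choose g hg using hconv
  have hadd : ∀ x y, g (x + y) = g x + g y := by
    intro x y
    refine tendsto_nhds_unique (hg (x + y)) ?_
    simpa [map_add] using (hg x).add (hg y)
  have hsmul : ∀ (c : ℂ) (x : H), g (c • x) = c • g x := by
    intro c x
    refine tendsto_nhds_unique (hg (c • x)) ?_
    simpa [map_smul] using (hg x).const_smul c
  have hgbound : ∀ x, ‖g x‖ ≤ 1 * ‖x‖ := by
    intro x
    refine le_of_tendsto' (hg x).norm fun i => ?_
    calc ‖T i x‖ ≤ ‖T i‖ * ‖x‖ := (T i).le_opNorm x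
      _ ≤ 1 * ‖x‖ := mul_le_mul_of_nonneg_right (hnorm1 i) (norm_nonneg x)
  let G : H →L[ℂ] H := LinearMap.mkContinuous
    { toFun := g, map_add' := hadd, map_smul' := hsmul } 1 hgbound
  have hGtend : ∀ x, Tendsto (fun i => T i x) atTop (𝓝 (G x)) := hg
  have hquad : ∀ ψ : H, (inner ℂ ψ (G ψ) : ℂ).re = ⨆ i, (inner ℂ ψ (T i ψ) : ℂ).re := by
    intro ψ
    have h1 : Tendsto (fun i => (inner ℂ ψ (T i ψ) : ℂ)) atTop (𝓝 (inner ℂ ψ (G ψ))) :=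
      Filter.Tendsto.inner tendsto_const_nhds (hGtend ψ)
    have h2 : Tendsto (fun i => (inner ℂ ψ (T i ψ) : ℂ).re) atTop
        (𝓝 ((inner ℂ ψ (G ψ) : ℂ).re)) := (Complex.continuous_re.tendsto _).comp h1
    exact tendsto_nhds_unique h2 (hrsup ψ)
  have hGsa : IsSelfAdjoint G := by
    rw [ContinuousLinearMap.isSelfAdjoint_iff_isSymmetric]
    intro x y
    have h1 : Tendsto (fun i => (inner ℂ (T i x) y : ℂ)) atTop (𝓝 (inner ℂ (G x) y)) :=
      Filter.Tendsto.inner (hGtend x) tendsto_const_nhds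
    have h2 : Tendsto (fun i => (inner ℂ x (T i y) : ℂ)) atTop (𝓝 (inner ℂ x (G y))) :=
      Filter.Tendsto.inner tendsto_const_nhds (hGtend y)
    have h3 : (fun i => (inner ℂ (T i x) y : ℂ)) = fun i => (inner ℂ x (T i y) : ℂ) :=
      funext fun i => (ContinuousLinearMap.isSelfAdjoint_iff_isSymmetric.mp (hsa i)) x y
    exact tendsto_nhds_unique (h3 ▸ h1) h2
  refine ⟨G, hGsa, ?_, ?_, hquad, ?_, ?_⟩
  · refine aux_le ((IsSelfAdjoint.zero _)) hGsa fun ψ => ?_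
    rw [hquad]
    have : (inner ℂ ψ ((0 : H →L[ℂ] H) ψ) : ℂ).re = 0 := by simp
    rw [this]
    exact le_ciSup_of_le (hrbdd ψ) (Classical.arbitrary ι) (hr0 _ ψ)
  · refine aux_le hGsa ((IsSelfAdjoint.one _)) fun ψ => ?_
    rw [hquad]
    have h2 : (inner ℂ ψ ((1 : H →L[ℂ] H) ψ) : ℂ).re = ‖ψ‖ ^ 2 := by
      rw [ContinuousLinearMap.one_apply, aux_inner_self]
    rw [h2]
    exact ciSup_le fun i => hrub i ψ
  · intro i
    refine aux_le (hsa i) hGsa fun ψ => ?_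
    rw [hquad]
    exact le_ciSup (hrbdd ψ) i
  · intro G' hG' hub
    refine aux_le hGsa hG' fun ψ => ?_
    rw [hquad]
    exact ciSup_le fun i => aux_le_mono (hub i) ψ
end

section
/- Let n be a nonempty finite type, C a quantum program, C† its Hilbert–Schmidt adjoint, and F an effect. Then C†(F) is the weakest precondition of F with respect to C: (i) C†(F) is an effect; (ii) for every density matrix ρ, ((C† F) * ρ).trace = (F * C(ρ)).trace, so in particular Re(((C† F) * ρ).trace) ≤ Re((F * C(ρ)).trace); and (iii) C†(F) is the greatest such predicate: every Hermitian matrix G with G.PosSemidef and Re((G * ρ).trace) ≤ Re((F * C(ρ)).trace) for all density matrices ρ satisfies (C†(F) - G).PosSemidef. Consequently the weakest precondition is unique. -/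
open scoped ComplexOrder

namespace HSWP

open Matrix

variable {n : Type*} [Fintype n] [DecidableEq n]

lemma traceRankOne (M : Matrix n n ℂ) (x : n → ℂ) :
    (M * Matrix.vecMulVec x (star x)).trace = star x ⬝ᵥ M *ᵥ x := by
  simp only [Matrix.trace, Matrix.diag, Matrix.mul_apply, Matrix.vecMulVec_apply,
    dotProduct, Matrix.mulVec, Pi.star_apply]
  refine Finset.sum_congr rfl fun i _ => ?_
  rw [Finset.mul_sum]
  exact Finset.sum_congr rfl fun j _ => by ring

lemma rankOnePSD (x : n → ℂ) : (Matrix.vecMulVec x (star x)).PosSemidef := by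
  rw [Matrix.vecMulVec_eq Unit]
  have h := Matrix.posSemidef_self_mul_conjTranspose (Matrix.replicateCol Unit x)
  rwa [Matrix.conjTranspose_replicateCol] at h

lemma psdTraceNonneg {M : Matrix n n ℂ} (hM : M.PosSemidef) : 0 ≤ M.trace := by
  rw [Matrix.trace]
  refine Finset.sum_nonneg fun i _ => ?_
  have h := hM.dotProduct_mulVec_nonneg (Pi.single i 1)
  rw [show star (Pi.single i 1 : n → ℂ) = Pi.single i 1 by rw [← Pi.single_star, star_one],
    single_dotProduct, Matrix.mulVec_single] at h
  simpa using h

open scoped MatrixOrder in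
lemma psdTraceMulNonneg {A B : Matrix n n ℂ} (hA : A.PosSemidef) (hB : B.PosSemidef) :
    0 ≤ (A * B).trace := by
  have h1 : A * B = A * (CFC.sqrt B * CFC.sqrt B) := by rw [CFC.sqrt_mul_sqrt_self B hB.nonneg]
  rw [h1, ← Matrix.mul_assoc, Matrix.trace_mul_comm, ← Matrix.mul_assoc]
  refine psdTraceNonneg ?_
  have h := hA.conjTranspose_mul_mul_same (CFC.sqrt B)
  rwa [(CFC.sqrt_nonneg B).posSemidef.1] at h

lemma hermQuadReal {M : Matrix n n ℂ} (hM : M.IsHermitian) (x : n → ℂ) :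
    (starRingEnd ℂ) (star x ⬝ᵥ M *ᵥ x) = star x ⬝ᵥ M *ᵥ x := by
  have h1 : star x ⬝ᵥ M *ᵥ x = star (star (M *ᵥ x) ⬝ᵥ x) := Matrix.star_dotProduct x (M *ᵥ x)
  rw [starRingEnd_apply]
  conv_lhs => rw [h1, star_star, Matrix.star_mulVec]
  rw [← Matrix.dotProduct_mulVec, hM.eq]

lemma hermOfRealQuad {M : Matrix n n ℂ}
    (h : ∀ x : n → ℂ, (starRingEnd ℂ) (star x ⬝ᵥ M *ᵥ x) = star x ⬝ᵥ M *ᵥ x) :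
    M.IsHermitian := by
  rw [Matrix.isHermitian_iff_isSymmetric, LinearMap.isSymmetric_iff_inner_map_self_real]
  intro v
  obtain ⟨x, rfl⟩ := (WithLp.equiv 2 (n → ℂ)).symm.surjective v
  change (starRingEnd ℂ) (x ⬝ᵥ star (M *ᵥ x)) = x ⬝ᵥ star (M *ᵥ x)
  rw [dotProduct_comm]
  have h1 : star (M *ᵥ x) ⬝ᵥ x = star (star x ⬝ᵥ M *ᵥ x) := Matrix.star_dotProduct (M *ᵥ x) x
  rw [h1, starRingEnd_apply, star_star]
  exact (h x).symm

lemma psdSmul {c : ℂ} (hc : 0 ≤ c) {A : Matrix n n ℂ} (hA : A.PosSemidef) :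
    (c • A).PosSemidef := by
  refine Matrix.PosSemidef.of_dotProduct_mulVec_nonneg ?_ ?_
  · have hcs : (starRingEnd ℂ) c = c :=
      Complex.conj_eq_iff_im.mpr ((Complex.le_def.mp hc).2.symm)
    rw [Matrix.IsHermitian, Matrix.conjTranspose_smul, hA.1.eq,
      show (star c) = c from hcs]
  · intro x
    rw [Matrix.smul_mulVec, dotProduct_smul, smul_eq_mul]
    exact mul_nonneg hc (hA.dotProduct_mulVec_nonneg x)

lemma traceVecMulVec (x : n → ℂ) :
    (Matrix.vecMulVec x (star x)).trace = star x ⬝ᵥ x := by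
  simp only [Matrix.trace, Matrix.diag, Matrix.vecMulVec_apply, dotProduct, Pi.star_apply]
  exact Finset.sum_congr rfl fun i _ => mul_comm _ _

/-- If the trace inequality holds on all density matrices, the Loewner inequality holds. -/
lemma loewner_of_trace_le {A B : Matrix n n ℂ} (hA : A.IsHermitian) (hB : B.IsHermitian)
    (h : ∀ ρ : Matrix n n ℂ, ρ.PosSemidef → ρ.trace = 1 →
      ((A * ρ).trace).re ≤ ((B * ρ).trace).re) :
    (B - A).PosSemidef := by
  refine Matrix.PosSemidef.of_dotProduct_mulVec_nonneg ?_ ?_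
  · exact hB.sub hA
  · intro x
    by_cases hx : x = 0
    · subst hx; simp
    · set t : ℂ := star x ⬝ᵥ x with ht
      have ht0 : 0 ≤ t := dotProduct_star_self_nonneg x
      have htne : t ≠ 0 := fun h0 => hx (dotProduct_star_self_eq_zero.mp h0)
      have htim : t.im = 0 := (Complex.le_def.mp ht0).2.symm
      have htre : 0 < t.re := by
        rcases lt_or_eq_of_le (Complex.le_def.mp ht0).1 with h' | h'
        · simpa using h'
        · exact absurd (Complex.ext h'.symm htim) htne
      have htinv : (t⁻¹ : ℂ) = ((t.re)⁻¹ : ℝ) := by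
        rw [show t = ((t.re : ℝ) : ℂ) from Complex.ext rfl (by simp [htim])]
        simp
      set ρ : Matrix n n ℂ := t⁻¹ • Matrix.vecMulVec x (star x) with hρ
      have hρpsd : ρ.PosSemidef := by
        refine psdSmul ?_ (rankOnePSD x)
        rw [htinv]
        exact Complex.zero_le_real.mpr (inv_nonneg.mpr (le_of_lt htre))
      have hρtr : ρ.trace = 1 := by
        rw [hρ, Matrix.trace_smul, traceVecMulVec, smul_eq_mul, inv_mul_cancel₀ htne]
      have hineq := h ρ hρpsd hρtr
      have htA : (A * ρ).trace = t⁻¹ * (star x ⬝ᵥ A *ᵥ x) := by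
        rw [hρ, Matrix.mul_smul, Matrix.trace_smul, traceRankOne, smul_eq_mul]
      have htB : (B * ρ).trace = t⁻¹ * (star x ⬝ᵥ B *ᵥ x) := by
        rw [hρ, Matrix.mul_smul, Matrix.trace_smul, traceRankOne, smul_eq_mul]
      rw [htA, htB, htinv] at hineq
      rw [Complex.re_ofReal_mul, Complex.re_ofReal_mul] at hineq
      have hre : (star x ⬝ᵥ A *ᵥ x).re ≤ (star x ⬝ᵥ B *ᵥ x).re :=
        le_of_mul_le_mul_left (by simpa [mul_comm] using hineq) (inv_pos.mpr htre)
      have hsub : star x ⬝ᵥ (B - A) *ᵥ x = star x ⬝ᵥ B *ᵥ x - star x ⬝ᵥ A *ᵥ x := by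
        rw [Matrix.sub_mulVec, dotProduct_sub]
      rw [hsub, Complex.le_def]
      constructor
      · simpa using hre
      · have hAim : (star x ⬝ᵥ A *ᵥ x).im = 0 :=
          Complex.conj_eq_iff_im.mp (hermQuadReal hA x)
        have hBim : (star x ⬝ᵥ B *ᵥ x).im = 0 :=
          Complex.conj_eq_iff_im.mp (hermQuadReal hB x)
        simp [hAim, hBim]

lemma psdAntisymm {A B : Matrix n n ℂ} (h1 : (A - B).PosSemidef) (h2 : (B - A).PosSemidef) :
    A = B := by
  have hzero : ∀ x : n → ℂ, star x ⬝ᵥ (A - B) *ᵥ x = 0 := by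
    intro x
    have ha := h1.dotProduct_mulVec_nonneg x
    have hb := h2.dotProduct_mulVec_nonneg x
    rw [show B - A = -(A - B) from (neg_sub _ _).symm, Matrix.neg_mulVec,
      dotProduct_neg] at hb
    exact le_antisymm (neg_nonneg.mp hb) ha
  have hlin : Matrix.toEuclideanLin (A - B) = 0 := by
    rw [← inner_map_self_eq_zero]
    intro v
    obtain ⟨x, rfl⟩ := (WithLp.equiv 2 (n → ℂ)).symm.surjective v
    change x ⬝ᵥ star ((A - B) *ᵥ x) = 0
    rw [dotProduct_comm]
    have h1' : star ((A - B) *ᵥ x) ⬝ᵥ x = star (star x ⬝ᵥ (A - B) *ᵥ x) :=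
      Matrix.star_dotProduct ((A - B) *ᵥ x) x
    rw [h1', hzero x, star_zero]
  have : A - B = 0 := by
    have := Matrix.toEuclideanLin.map_eq_zero_iff.mp hlin
    exact this
  exact sub_eq_zero.mp this

end HSWP

open Matrix in
/-- For a quantum program `C` with Hilbert–Schmidt adjoint `C†` and an effect `F`, the
matrix `C†(F)` is the weakest precondition of `F` with respect to `C`: it is an effect,
it satisfies `((C† F) * ρ).trace = (F * C(ρ)).trace` for all density matrices `ρ`, it is
the greatest precondition in the Loewner order, and it is the unique such predicate. -/
theorem hs_adjoint_is_weakest_precondition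
    {n : Type*} [Fintype n] [DecidableEq n] [Nonempty n]
    (C : Matrix n n ℂ →ₗ[ℂ] Matrix n n ℂ)
    (hCpos : ∀ σ : Matrix n n ℂ, σ.PosSemidef → (C σ).PosSemidef)
    (hCtr : ∀ σ : Matrix n n ℂ, (C σ).trace = σ.trace)
    (Cd : Matrix n n ℂ →ₗ[ℂ] Matrix n n ℂ)
    (hadj : ∀ F ρ : Matrix n n ℂ, ((Cd F) * ρ).trace = (F * C ρ).trace)
    (F : Matrix n n ℂ) (hF : F.PosSemidef) (hF1 : (1 - F).PosSemidef) :
    ((Cd F).PosSemidef ∧ (1 - Cd F).PosSemidef) ∧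
    (∀ ρ : Matrix n n ℂ, ρ.PosSemidef → ρ.trace = 1 →
      ((Cd F) * ρ).trace = (F * C ρ).trace ∧
      (((Cd F) * ρ).trace).re ≤ ((F * C ρ).trace).re) ∧
    (∀ G : Matrix n n ℂ, G.IsHermitian → G.PosSemidef →
      (∀ ρ : Matrix n n ℂ, ρ.PosSemidef → ρ.trace = 1 →
        ((G * ρ).trace).re ≤ ((F * C ρ).trace).re) →
      (Cd F - G).PosSemidef) ∧
    (∀ W : Matrix n n ℂ, W.IsHermitian → W.PosSemidef →
      (∀ ρ : Matrix n n ℂ, ρ.PosSemidef → ρ.trace = 1 →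
        ((W * ρ).trace).re ≤ ((F * C ρ).trace).re) →
      (∀ G : Matrix n n ℂ, G.IsHermitian → G.PosSemidef →
        (∀ ρ : Matrix n n ℂ, ρ.PosSemidef → ρ.trace = 1 →
          ((G * ρ).trace).re ≤ ((F * C ρ).trace).re) →
        (W - G).PosSemidef) →
      W = Cd F) := by
  have hCV : ∀ x : n → ℂ, (C (Matrix.vecMulVec x (star x))).PosSemidef :=
    fun x => hCpos _ (HSWP.rankOnePSD x)
  -- quadratic form of Cd F
  have hquad : ∀ x : n → ℂ, star x ⬝ᵥ (Cd F) *ᵥ x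
      = (F * C (Matrix.vecMulVec x (star x))).trace := by
    intro x
    rw [← HSWP.traceRankOne, hadj]
  have hquadnn : ∀ x : n → ℂ, 0 ≤ star x ⬝ᵥ (Cd F) *ᵥ x := by
    intro x
    rw [hquad x]
    exact HSWP.psdTraceMulNonneg hF (hCV x)
  have hDpsd : (Cd F).PosSemidef := by
    refine Matrix.PosSemidef.of_dotProduct_mulVec_nonneg (HSWP.hermOfRealQuad fun x => ?_) hquadnn
    exact Complex.conj_eq_iff_im.mpr ((Complex.le_def.mp (hquadnn x)).2.symm)
  -- quadratic form of 1 - Cd F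
  have hquad1 : ∀ x : n → ℂ, star x ⬝ᵥ (1 - Cd F) *ᵥ x
      = ((1 - F) * C (Matrix.vecMulVec x (star x))).trace := by
    intro x
    rw [← HSWP.traceRankOne, Matrix.sub_mul, Matrix.sub_mul, Matrix.one_mul, Matrix.one_mul,
      Matrix.trace_sub, Matrix.trace_sub, hadj, hCtr]
  have hquad1nn : ∀ x : n → ℂ, 0 ≤ star x ⬝ᵥ (1 - Cd F) *ᵥ x := by
    intro x
    rw [hquad1 x]
    exact HSWP.psdTraceMulNonneg hF1 (hCV x)
  have hD1psd : (1 - Cd F).PosSemidef := by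
    refine Matrix.PosSemidef.of_dotProduct_mulVec_nonneg (HSWP.hermOfRealQuad fun x => ?_) hquad1nn
    exact Complex.conj_eq_iff_im.mpr ((Complex.le_def.mp (hquad1nn x)).2.symm)
  -- part 3 as a reusable fact
  have part3 : ∀ G : Matrix n n ℂ, G.IsHermitian → G.PosSemidef →
      (∀ ρ : Matrix n n ℂ, ρ.PosSemidef → ρ.trace = 1 →
        ((G * ρ).trace).re ≤ ((F * C ρ).trace).re) →
      (Cd F - G).PosSemidef := by
    intro G hGh _ hGle
    refine HSWP.loewner_of_trace_le hGh hDpsd.1 ?_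
    intro ρ hρ h1
    rw [hadj]
    exact hGle ρ hρ h1
  refine ⟨⟨hDpsd, hD1psd⟩, ?_, part3, ?_⟩
  · intro ρ hρ h1
    exact ⟨hadj F ρ, le_of_eq (by rw [hadj])⟩
  · intro W hWh hWpsd hWle hWgreat
    have h1 : (W - Cd F).PosSemidef :=
      hWgreat (Cd F) hDpsd.1 hDpsd (fun ρ hρ htr => le_of_eq (by rw [hadj]))
    have h2 : (Cd F - W).PosSemidef := part3 W hWh hWpsd hWle
    exact HSWP.psdAntisymm h1 h2
end

section
/- (D'Hondt–Panangaden special case.) Let n be a nonempty finite type, s a finite index set, and (E i)_{i ∈ s} matrices in Matrix n n ℂ with ∑_{i ∈ s} (E i)ᴴ * (E i) = 1. Define the quantum program C(ρ) = ∑_{i ∈ s} (E i) * ρ * (E i)ᴴ. Let M be an effect and set wp(M) = ∑_{i ∈ s} (E i)ᴴ * M * (E i). Then: (i) wp(M) is an effect; (ii) for every density matrix ρ, (wp(M) * ρ).trace = (M * C(ρ)).trace; and (iii) wp(M) is the greatest matrix with this precondition property: every Hermitian positive semidefinite G with Re((G * ρ).trace) ≤ Re((M * C(ρ)).trace) for all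 density matrices ρ satisfies (wp(M) - G).PosSemidef. -/
open scoped ComplexOrder Matrix
open Matrix

section aux
variable {n : Type*} [Fintype n] [DecidableEq n]

lemma kwp_vecMulVec_psd (y : n → ℂ) : (Matrix.vecMulVec y (star y)).PosSemidef := by
  rw [Matrix.vecMulVec_eq Unit, ← Matrix.conjTranspose_replicateCol]
  exact Matrix.posSemidef_self_mul_conjTranspose _

lemma kwp_trace_mul_vecMulVec (A : Matrix n n ℂ) (y : n → ℂ) :
    (A * Matrix.vecMulVec y (star y)).trace = star y ⬝ᵥ (A *ᵥ y) := by
  simp only [Matrix.trace, Matrix.diag, Matrix.mul_apply, Matrix.vecMulVec_apply,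
    dotProduct, Matrix.mulVec, Pi.star_apply, Finset.mul_sum]
  refine Finset.sum_congr rfl fun j _ => Finset.sum_congr rfl fun k _ => ?_
  ring

lemma kwp_trace_vecMulVec (y : n → ℂ) :
    (Matrix.vecMulVec y (star y)).trace = star y ⬝ᵥ y := by
  simp only [Matrix.trace, Matrix.diag, Matrix.vecMulVec_apply, dotProduct, Pi.star_apply]
  exact Finset.sum_congr rfl fun i _ => mul_comm _ _

lemma kwp_herm_form_real {A : Matrix n n ℂ} (hA : A.IsHermitian) (x : n → ℂ) :
    (star x ⬝ᵥ (A *ᵥ x)).im = 0 := by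
  have h : star (star x ⬝ᵥ (A *ᵥ x)) = star x ⬝ᵥ (A *ᵥ x) := by
    calc star (star x ⬝ᵥ (A *ᵥ x)) = star (A *ᵥ x) ⬝ᵥ x :=
          (Matrix.star_dotProduct _ _).symm
      _ = (star x ᵥ* Aᴴ) ⬝ᵥ x := by rw [Matrix.star_mulVec]
      _ = star x ⬝ᵥ (A *ᵥ x) := by rw [hA.eq, ← Matrix.dotProduct_mulVec]
  have h2 := congrArg Complex.im h
  simp only [Complex.star_def, Complex.conj_im] at h2
  linarith
end aux

/-- D'Hondt–Panangaden special case: for a quantum program in Kraus form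
`C(ρ) = ∑ i ∈ s, E i * ρ * (E i)ᴴ` with `∑ i ∈ s, (E i)ᴴ * E i = 1`, and an effect `M`,
the matrix `wp(M) = ∑ i ∈ s, (E i)ᴴ * M * E i` is the weakest precondition of `M`:
it is an effect, its satisfiability in any state equals that of `M` after the program,
and it is the greatest such predicate in the Loewner order. -/
theorem kraus_weakest_precondition
    {n : Type*} [Fintype n] [DecidableEq n] [Nonempty n]
    {ι : Type*} (s : Finset ι) (E : ι → Matrix n n ℂ)
    (hE : ∑ i ∈ s, (E i)ᴴ * E i = 1)
    (M : Matrix n n ℂ) (hM : M.PosSemidef) (hM1 : (1 - M).PosSemidef) :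
    ((∑ i ∈ s, (E i)ᴴ * M * E i).PosSemidef ∧
      (1 - ∑ i ∈ s, (E i)ᴴ * M * E i).PosSemidef) ∧
    (∀ ρ : Matrix n n ℂ, ρ.PosSemidef → ρ.trace = 1 →
      ((∑ i ∈ s, (E i)ᴴ * M * E i) * ρ).trace
        = (M * ∑ i ∈ s, E i * ρ * (E i)ᴴ).trace) ∧
    (∀ G : Matrix n n ℂ, G.IsHermitian → G.PosSemidef →
      (∀ ρ : Matrix n n ℂ, ρ.PosSemidef → ρ.trace = 1 →
        ((G * ρ).trace).re ≤ ((M * ∑ i ∈ s, E i * ρ * (E i)ᴴ).trace).re) →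
      ((∑ i ∈ s, (E i)ᴴ * M * E i) - G).PosSemidef) := by
  classical
  set W := ∑ i ∈ s, (E i)ᴴ * M * E i with hWdef
  have hWps : W.PosSemidef := by
    refine Finset.sum_induction _ (fun A : Matrix n n ℂ => A.PosSemidef) (fun a b ha hb => ha.add hb) Matrix.PosSemidef.zero ?_
    exact fun i _ => hM.conjTranspose_mul_mul_same (E i)
  have h1W : (1 - W) = ∑ i ∈ s, (E i)ᴴ * (1 - M) * E i := by
    have : ∀ i ∈ s, (E i)ᴴ * (1 - M) * E i = (E i)ᴴ * E i - (E i)ᴴ * M * E i := by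
      intro i _
      rw [Matrix.mul_sub, Matrix.sub_mul, Matrix.mul_one]
    rw [Finset.sum_congr rfl this, Finset.sum_sub_distrib, hE]
  have h1Wps : (1 - W).PosSemidef := by
    rw [h1W]
    refine Finset.sum_induction _ (fun A : Matrix n n ℂ => A.PosSemidef) (fun a b ha hb => ha.add hb) Matrix.PosSemidef.zero ?_
    exact fun i _ => hM1.conjTranspose_mul_mul_same (E i)
  have key : ∀ ρ : Matrix n n ℂ,
      (W * ρ).trace = (M * ∑ i ∈ s, E i * ρ * (E i)ᴴ).trace := by
    intro ρ
    rw [hWdef, Finset.sum_mul, Matrix.mul_sum, Matrix.trace_sum, Matrix.trace_sum]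
    refine Finset.sum_congr rfl fun i _ => ?_
    simp only [Matrix.mul_assoc]
    rw [Matrix.trace_mul_comm]
    simp only [Matrix.mul_assoc]
  refine ⟨⟨hWps, h1Wps⟩, fun ρ _ _ => key ρ, ?_⟩
  intro G hGh hGps hle
  refine Matrix.posSemidef_iff_dotProduct_mulVec.mpr ⟨hWps.isHermitian.sub hGh, fun x => ?_⟩
  by_cases hx : x = 0
  · simp [hx]
  -- normalize x
  have hdpos : 0 < (star x ⬝ᵥ x).re := by
    have h0 : 0 ≤ star x ⬝ᵥ x := dotProduct_star_self_nonneg x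
    have hne : star x ⬝ᵥ x ≠ 0 := fun h => hx (dotProduct_star_self_eq_zero.mp h)
    have := lt_of_le_of_ne h0 (Ne.symm hne)
    exact (Complex.lt_def.mp this).1
  set c : ℝ := (star x ⬝ᵥ x).re with hc
  have him : (star x ⬝ᵥ x).im = 0 := (Complex.nonneg_iff.mp (dotProduct_star_self_nonneg x)).2.symm
  have hxx : star x ⬝ᵥ x = (c : ℂ) := by
    apply Complex.ext <;> simp [hc, him]
  set t : ℝ := Real.sqrt c with ht
  have htpos : 0 < t := Real.sqrt_pos.mpr hdpos
  set y : n → ℂ := ((t : ℂ))⁻¹ • x with hy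
  have hty : x = (t : ℂ) • y := by
    rw [hy, smul_smul, mul_inv_cancel₀ (by exact_mod_cast htpos.ne'), one_smul]
  set ρ := Matrix.vecMulVec y (star y) with hρ
  have hρps : ρ.PosSemidef := kwp_vecMulVec_psd y
  have hρtr : ρ.trace = 1 := by
    rw [hρ, kwp_trace_vecMulVec, hy]
    simp only [star_smul, smul_dotProduct, dotProduct_smul, star_inv₀, Complex.star_def,
      Complex.conj_ofReal, smul_eq_mul]
    rw [hxx]
    field_simp
    rw [← Complex.ofReal_pow, ht, Real.sq_sqrt hdpos.le]
  have hform : ∀ A : Matrix n n ℂ, star x ⬝ᵥ (A *ᵥ x) = (c : ℂ) * (A * ρ).trace := by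
    intro A
    rw [kwp_trace_mul_vecMulVec, hty]
    simp only [star_smul, smul_dotProduct, dotProduct_smul, Matrix.mulVec_smul,
      Complex.star_def, Complex.conj_ofReal, smul_eq_mul]
    rw [← mul_assoc, ← Complex.ofReal_mul, ht, Real.mul_self_sqrt hdpos.le]
  -- the inequality
  have hWG : ((G * ρ).trace).re ≤ ((W * ρ).trace).re := by
    rw [key ρ]
    exact hle ρ hρps hρtr
  -- quadratic form value
  have hq : star x ⬝ᵥ ((W - G) *ᵥ x) = (c : ℂ) * ((W * ρ).trace - (G * ρ).trace) := by
    rw [Matrix.sub_mulVec, dotProduct_sub, hform W, hform G]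
    ring
  have hherm : (star x ⬝ᵥ ((W - G) *ᵥ x)).im = 0 :=
    kwp_herm_form_real (hWps.isHermitian.sub hGh) x
  rw [Complex.nonneg_iff]
  constructor
  · rw [hq]
    simp only [Complex.mul_re, Complex.ofReal_re, Complex.ofReal_im, Complex.sub_re, zero_mul,
      sub_zero]
    have h3 : 0 ≤ ((W * ρ).trace).re - ((G * ρ).trace).re := by linarith
    nlinarith [hdpos]
  · exact hherm.symm
end

section
/- Let n be a nonempty finite type and G, H Hermitian matrices in Matrix n n ℂ. Then Re((G * ρ).trace) ≤ Re((H * ρ).trace) holds for every density matrix ρ if and only if (H - G).PosSemidef. (This identifies the satisfiability order on quantum predicates with the Loewner order.) -/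
open scoped ComplexOrder
open Matrix

lemma trace_mul_vecMulVec {n : Type*} [Fintype n] (M : Matrix n n ℂ) (x : n → ℂ) :
    (M * vecMulVec x (star x)).trace = star x ⬝ᵥ M.mulVec x := by
  simp only [Matrix.trace, Matrix.diag, Matrix.mul_apply, vecMulVec_apply, dotProduct,
    Matrix.mulVec, dotProduct, Pi.star_apply, Finset.mul_sum]
  exact Finset.sum_congr rfl fun i _ => Finset.sum_congr rfl fun j _ => by ring

lemma vecMulVec_posSemidef {n : Type*} [Fintype n] (x : n → ℂ) :
    (vecMulVec x (star x)).PosSemidef := by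
  rw [vecMulVec_eq Unit, ← conjTranspose_replicateCol]
  exact posSemidef_self_mul_conjTranspose _

lemma posSemidef_real_smul {n : Type*} [Fintype n] {A : Matrix n n ℂ} (hA : A.PosSemidef)
    {c : ℝ} (hc : 0 ≤ c) : ((c : ℂ) • A).PosSemidef := by
  refine .of_dotProduct_mulVec_nonneg ?_ ?_
  · have := hA.1
    rw [Matrix.IsHermitian, conjTranspose_smul, this]
    simp
  · intro y
    rw [Matrix.smul_mulVec, dotProduct_smul, smul_eq_mul]
    exact mul_nonneg (by rw [Complex.nonneg_iff]; simp [hc]) (hA.dotProduct_mulVec_nonneg y)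

lemma im_dot_eq_zero {n : Type*} [Fintype n] {A : Matrix n n ℂ} (hA : A.IsHermitian)
    (x : n → ℂ) : (star x ⬝ᵥ A.mulVec x).im = 0 := by
  have : (starRingEnd ℂ) (star x ⬝ᵥ A.mulVec x) = star x ⬝ᵥ A.mulVec x := by
    have h1 : star (star x ⬝ᵥ A.mulVec x) = star (A.mulVec x) ⬝ᵥ x := by
      rw [star_dotProduct]; simp
    have h2 : star (A.mulVec x) = star x ᵥ* Aᴴ := star_mulVec A x
    calc (starRingEnd ℂ) (star x ⬝ᵥ A.mulVec x)
        = star (A.mulVec x) ⬝ᵥ x := h1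
      _ = (star x ᵥ* A) ⬝ᵥ x := by rw [h2, hA.eq]
      _ = star x ⬝ᵥ A.mulVec x := (dotProduct_mulVec _ _ _).symm
  exact Complex.conj_eq_iff_im.mp this

lemma trace_conjTranspose_mul_self_re_nonneg {n : Type*} [Fintype n] (M : Matrix n n ℂ) :
    0 ≤ ((Mᴴ * M).trace).re := by
  have : (Mᴴ * M).trace = ∑ i, ∑ j, ((Complex.normSq (M j i) : ℝ) : ℂ) := by
    simp only [Matrix.trace, Matrix.diag, Matrix.mul_apply, Matrix.conjTranspose_apply,
      Complex.star_def, ← Complex.normSq_eq_conj_mul_self]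
  rw [this]
  rw [Complex.re_sum]
  refine Finset.sum_nonneg fun i _ => ?_
  rw [Complex.re_sum]
  exact Finset.sum_nonneg fun j _ => by simp [Complex.normSq_nonneg]

/-- The satisfiability order on Hermitian quantum predicates coincides with the Loewner
order: `Re((G * ρ).trace) ≤ Re((H * ρ).trace)` for all density matrices `ρ` iff
`H - G` is positive semidefinite. -/
theorem sat_order_iff_loewner_order
    {n : Type*} [Fintype n] [DecidableEq n] [Nonempty n]
    (G H : Matrix n n ℂ) (hG : G.IsHermitian) (hH : H.IsHermitian) :
    (∀ ρ : Matrix n n ℂ, ρ.PosSemidef → ρ.trace = 1 →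
      ((G * ρ).trace).re ≤ ((H * ρ).trace).re) ↔ (H - G).PosSemidef := by
  constructor
  · intro h
    refine .of_dotProduct_mulVec_nonneg (hH.sub hG) fun x => ?_
    rcases eq_or_ne x 0 with rfl | hx
    · simp
    · have hc : (0:ℝ) < ∑ i, Complex.normSq (x i) := by
        have : ∃ i, x i ≠ 0 := by
          by_contra h'; push_neg at h'; exact hx (funext h')
        obtain ⟨i, hi⟩ := this
        exact Finset.sum_pos' (fun j _ => Complex.normSq_nonneg _)
          ⟨i, Finset.mem_univ i, Complex.normSq_pos.2 hi⟩
      set c : ℝ := ∑ i, Complex.normSq (x i) with hcdef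
      set ρ : Matrix n n ℂ := ((c⁻¹ : ℝ) : ℂ) • vecMulVec x (star x) with hρ
      have hρψ : ρ.PosSemidef := posSemidef_real_smul (vecMulVec_posSemidef x)
        (inv_nonneg.2 hc.le)
      have htr : ρ.trace = 1 := by
        rw [hρ, trace_smul]
        have hv : (vecMulVec x (star x)).trace = (c : ℂ) := by
          simp [Matrix.trace, Matrix.diag, vecMulVec_apply, hcdef, Complex.mul_conj]
        rw [hv, smul_eq_mul, ← Complex.ofReal_mul, inv_mul_cancel₀ hc.ne']
        simp
      have key := h ρ hρψ htr
      have hG' : (G * ρ).trace = ((c⁻¹:ℝ):ℂ) * (star x ⬝ᵥ G.mulVec x) := by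
        rw [hρ, Matrix.mul_smul, trace_smul, trace_mul_vecMulVec]; rfl
      have hH' : (H * ρ).trace = ((c⁻¹:ℝ):ℂ) * (star x ⬝ᵥ H.mulVec x) := by
        rw [hρ, Matrix.mul_smul, trace_smul, trace_mul_vecMulVec]; rfl
      rw [hG', hH', Complex.re_ofReal_mul, Complex.re_ofReal_mul] at key
      have hre : (star x ⬝ᵥ G.mulVec x).re ≤ (star x ⬝ᵥ H.mulVec x).re :=
        (mul_le_mul_iff_right₀ (inv_pos.2 hc)).mp key
      have hsub : star x ⬝ᵥ (H - G).mulVec x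
          = star x ⬝ᵥ H.mulVec x - star x ⬝ᵥ G.mulVec x := by
        rw [Matrix.sub_mulVec, dotProduct_sub]
      rw [Complex.nonneg_iff, hsub]
      constructor
      · simp only [Complex.sub_re]; linarith
      · have h0 := im_dot_eq_zero (hH.sub hG) x
        rw [hsub] at h0
        exact h0.symm
  · intro h ρ hρ htr
    obtain ⟨B, hB⟩ : ∃ B : Matrix n n ℂ, H - G = Bᴴ * B := by
      open scoped MatrixOrder Matrix.Norms.L2Operator in
      exact CStarAlgebra.nonneg_iff_eq_star_mul_self.mp h.nonneg
    obtain ⟨C, hC⟩ : ∃ C : Matrix n n ℂ, ρ = Cᴴ * C := by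
      open scoped MatrixOrder Matrix.Norms.L2Operator in
      exact CStarAlgebra.nonneg_iff_eq_star_mul_self.mp hρ.nonneg
    have h1 : 0 ≤ (((H - G) * ρ).trace).re := by
      have : (H - G) * ρ = Bᴴ * B * Cᴴ * C := by rw [hB, hC]; simp only [Matrix.mul_assoc]
      rw [this]
      have h2 : (Bᴴ * B * Cᴴ * C).trace = ((B * Cᴴ)ᴴ * (B * Cᴴ)).trace := by
        rw [Matrix.trace_mul_comm]
        congr 1
        rw [Matrix.conjTranspose_mul, Matrix.conjTranspose_conjTranspose,
          Matrix.mul_assoc]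
        simp only [Matrix.mul_assoc]
      rw [h2]
      exact trace_conjTranspose_mul_self_re_nonneg _
    have h2 : ((H - G) * ρ).trace = (H * ρ).trace - (G * ρ).trace := by
      rw [Matrix.sub_mul, trace_sub]
    rw [h2, Complex.sub_re] at h1
    linarith
end
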